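/- Let N ≥ 1 be an integer. Then lim_{ξ→0⁺} (1 − 2·√ξ·K₁(2·√ξ))^N / (ξ^N·(−ln ξ)^N) = 1. -/

import Mathlib

open Filter

/-- The modified Bessel function of the second kind, via its integral representation
`K_ν(x) = ∫₀^∞ exp(−x cosh t) cosh(ν t) dt`. -/
noncomputable def besselK (ν x : ℝ) : ℝ :=
  ∫ t in Set.Ioi (0 : ℝ), Real.exp (-x * Real.cosh t) * Real.cosh (ν * t)

open MeasureTheory Real Set Topology


lemma coshLeExp {t : ℝ} (ht : 0 ≤ t) : Real.cosh t ≤ Real.exp t := by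
  rw [Real.cosh_eq]
  have : Real.exp (-t) ≤ Real.exp t := Real.exp_le_exp.2 (by linarith)
  linarith

lemma halfExpLeCosh (t : ℝ) : Real.exp t / 2 ≤ Real.cosh t := by
  rw [Real.cosh_eq]
  have := Real.exp_pos (-t)
  linarith

lemma intK {x : ℝ} (hx : 0 < x) (n : ℕ) :
    IntegrableOn (fun t => Real.cosh t ^ n * Real.exp (-x * Real.cosh t)) (Set.Ioi 0) := by
  apply integrable_of_isBigO_exp_neg one_pos
  · fun_prop
  · apply Asymptotics.IsBigO.of_bound 1
    have h1 : Tendsto (fun t : ℝ => Real.exp t / t ^ 1) atTop atTop :=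
      Real.tendsto_exp_div_pow_atTop 1
    filter_upwards [h1.eventually_ge_atTop (2 * (n + 1) / x), eventually_ge_atTop (1:ℝ)]
      with t ht ht1
    have htpos : (0:ℝ) < t := by linarith
    have hc1 : Real.cosh t ≤ Real.exp t := coshLeExp htpos.le
    have hc2 : Real.exp t / 2 ≤ Real.cosh t := halfExpLeCosh t
    have hkey : (n + 1 : ℝ) * t ≤ x * Real.cosh t := by
      rw [pow_one, div_le_div_iff₀ hx htpos] at ht
      nlinarith
    have h2 : Real.cosh t ^ n * Real.exp (-x * Real.cosh t) ≤ Real.exp (-1 * t) := by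
      calc Real.cosh t ^ n * Real.exp (-x * Real.cosh t)
          ≤ Real.exp t ^ n * Real.exp (-x * Real.cosh t) := by
            gcongr
        _ = Real.exp (n * t - x * Real.cosh t) := by
            rw [← Real.exp_nat_mul, ← Real.exp_add]; ring_nf
        _ ≤ Real.exp (-1 * t) := by
            apply Real.exp_le_exp.2; push_cast at hkey ⊢; linarith
    have hpos : 0 ≤ Real.cosh t ^ n * Real.exp (-x * Real.cosh t) :=
      mul_nonneg (pow_nonneg ((Real.cosh_pos (x:=t)).le) n) (Real.exp_pos _).le
    rw [Real.norm_eq_abs, Real.norm_eq_abs, abs_of_nonneg hpos, abs_of_nonneg (Real.exp_pos _).le,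
      one_mul]
    exact h2

lemma coshMulLe {ν t : ℝ} (hν0 : 0 ≤ ν) (hν1 : ν ≤ 1) : Real.cosh (ν * t) ≤ Real.cosh t := by
  rw [Real.cosh_le_cosh, abs_mul]
  calc |ν| * |t| ≤ 1 * |t| := by
        apply mul_le_mul_of_nonneg_right _ (abs_nonneg t)
        rwa [abs_of_nonneg hν0]
    _ = |t| := one_mul _

lemma intK' {x ν : ℝ} (hx : 0 < x) (hν0 : 0 ≤ ν) (hν1 : ν ≤ 1) :
    IntegrableOn (fun t => Real.exp (-x * Real.cosh t) * Real.cosh (ν * t)) (Set.Ioi 0) := by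
  apply Integrable.mono (intK hx 1) (Continuous.aestronglyMeasurable (by fun_prop))
  apply ae_of_all
  intro t
  rw [Real.norm_eq_abs, Real.norm_eq_abs, abs_of_nonneg, abs_of_nonneg, pow_one]
  · rw [mul_comm]
    exact mul_le_mul_of_nonneg_right (coshMulLe hν0 hν1) (Real.exp_pos _).le
  · exact mul_nonneg (pow_nonneg (Real.cosh_pos _).le _) (Real.exp_pos _).le
  · exact mul_nonneg (Real.exp_pos _).le (Real.cosh_pos _).le

lemma hasDerivK {ν x : ℝ} (hν0 : 0 ≤ ν) (hν1 : ν ≤ 1) (hx : 0 < x) :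
    HasDerivAt (besselK ν)
      (∫ t in Set.Ioi (0:ℝ), -(Real.cosh t * (Real.exp (-x * Real.cosh t) * Real.cosh (ν * t)))) x := by
  have key := hasDerivAt_integral_of_dominated_loc_of_deriv_le (μ := volume.restrict (Set.Ioi 0))
    (F := fun u t => Real.exp (-u * Real.cosh t) * Real.cosh (ν * t))
    (F' := fun u t => -(Real.cosh t * (Real.exp (-u * Real.cosh t) * Real.cosh (ν * t))))
    (x₀ := x) (bound := fun t => Real.cosh t ^ 2 * Real.exp (-(x/2) * Real.cosh t))
    (Metric.ball_mem_nhds x (half_pos hx))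
    (Eventually.of_forall fun u => (Continuous.aestronglyMeasurable (by fun_prop)))
    (intK' hx hν0 hν1)
    (Continuous.aestronglyMeasurable (by fun_prop))
    (ae_of_all _ ?_) (intK (half_pos hx) 2) (ae_of_all _ ?_)
  · exact key.2
  · intro t u hu
    rw [Metric.mem_ball, Real.dist_eq, abs_lt] at hu
    have hu2 : x / 2 ≤ u := by linarith
    have h1 : Real.exp (-u * Real.cosh t) ≤ Real.exp (-(x/2) * Real.cosh t) := by
      apply Real.exp_le_exp.2
      have := Real.cosh_pos t
      nlinarith
    rw [norm_neg, Real.norm_eq_abs, abs_of_nonneg]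
    · calc Real.cosh t * (Real.exp (-u * Real.cosh t) * Real.cosh (ν * t))
          ≤ Real.cosh t * (Real.exp (-(x/2) * Real.cosh t) * Real.cosh t) := by
            apply mul_le_mul_of_nonneg_left _ (Real.cosh_pos _).le
            exact mul_le_mul h1 (coshMulLe hν0 hν1) (Real.cosh_pos _).le (Real.exp_pos _).le
        _ = Real.cosh t ^ 2 * Real.exp (-(x/2) * Real.cosh t) := by ring
    · positivity
  · intro t u _
    have h : HasDerivAt (fun u : ℝ => Real.exp (-u * Real.cosh t))
        (-Real.cosh t * Real.exp (-u * Real.cosh t)) u := by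
      have h0 : HasDerivAt (fun u : ℝ => -u * Real.cosh t) (-Real.cosh t) u := by
        simpa using ((hasDerivAt_id u).neg.mul_const (Real.cosh t))
      simpa [mul_comm] using h0.exp
    have := h.mul_const (Real.cosh (ν * t))
    refine this.congr_deriv ?_
    ring

lemma tendstoCosh : Tendsto Real.cosh atTop atTop := by
  apply tendsto_atTop_mono halfExpLeCosh
  exact (Real.tendsto_exp_atTop).atTop_div_const two_pos

lemma coshExpTendsto {x : ℝ} (hx : 0 < x) :
    Tendsto (fun t => Real.cosh t * Real.exp (-x * Real.cosh t)) atTop (𝓝 0) := by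
  have h := (tendsto_rpow_mul_exp_neg_mul_atTop_nhds_zero 1 x hx).comp tendstoCosh
  apply h.congr'
  filter_upwards [eventually_ge_atTop (0:ℝ)] with t _
  simp [Real.rpow_one]

lemma ftcId {x : ℝ} (hx : 0 < x) :
    ∫ t in Set.Ioi (0:ℝ), (Real.cosh t - x * Real.sinh t ^ 2) * Real.exp (-x * Real.cosh t) = 0 := by
  have hderiv : ∀ t ∈ Set.Ioi (0:ℝ),
      HasDerivAt (fun t => Real.sinh t * Real.exp (-x * Real.cosh t))
        ((Real.cosh t - x * Real.sinh t ^ 2) * Real.exp (-x * Real.cosh t)) t := by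
    intro t _
    have h1 : HasDerivAt (fun t : ℝ => -x * Real.cosh t) (-x * Real.sinh t) t :=
      (Real.hasDerivAt_cosh t).const_mul (-x)
    have h2 := ((Real.hasDerivAt_sinh t).mul h1.exp)
    refine h2.congr_deriv ?_
    ring
  have hint : IntegrableOn
      (fun t => (Real.cosh t - x * Real.sinh t ^ 2) * Real.exp (-x * Real.cosh t)) (Set.Ioi 0) := by
    apply Integrable.mono (((intK hx 2).const_mul (1 + x))) (Continuous.aestronglyMeasurable (by fun_prop))
    apply ae_of_all
    intro t
    have hc := Real.cosh_pos t
    have hs : Real.sinh t ^ 2 ≤ Real.cosh t ^ 2 := by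
      have := Real.cosh_sq_sub_sinh_sq t
      nlinarith
    have hc2 : Real.cosh t ≤ Real.cosh t ^ 2 := by nlinarith [Real.one_le_cosh t]
    have he := Real.exp_pos (-x * Real.cosh t)
    have h1x : (0:ℝ) ≤ 1 + x := by linarith
    rw [Real.norm_eq_abs, Real.norm_eq_abs, abs_mul, abs_of_nonneg he.le,
      abs_of_nonneg (mul_nonneg h1x (by positivity))]
    calc |Real.cosh t - x * Real.sinh t ^ 2| * Real.exp (-x * Real.cosh t)
        ≤ ((1 + x) * Real.cosh t ^ 2) * Real.exp (-x * Real.cosh t) := by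
          apply mul_le_mul_of_nonneg_right _ he.le
          rw [abs_le]
          constructor <;> nlinarith [mul_nonneg hx.le (sq_nonneg (Real.sinh t))]
      _ = (1 + x) * (Real.cosh t ^ 2 * Real.exp (-x * Real.cosh t)) := by ring
  have htend : Tendsto (fun t => Real.sinh t * Real.exp (-x * Real.cosh t)) atTop (𝓝 0) := by
    apply squeeze_zero_norm _ (coshExpTendsto hx)
    intro t
    rw [Real.norm_eq_abs, abs_mul, abs_of_nonneg (Real.exp_pos _).le]
    apply mul_le_mul_of_nonneg_right _ (Real.exp_pos _).le
    rw [Real.abs_sinh]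
    calc Real.sinh |t| ≤ Real.cosh |t| := (Real.sinh_lt_cosh _).le
      _ = Real.cosh t := Real.cosh_abs t
  have := integral_Ioi_of_hasDerivAt_of_tendsto (a := 0)
    (by fun_prop : Continuous (fun t => Real.sinh t * Real.exp (-x * Real.cosh t))).continuousWithinAt
    hderiv hint htend
  simpa using this

lemma besselK_zero_eq (x : ℝ) :
    besselK 0 x = ∫ t in Set.Ioi (0:ℝ), Real.exp (-x * Real.cosh t) := by
  unfold besselK; simp

lemma besselK_one_eq (x : ℝ) :
    besselK 1 x = ∫ t in Set.Ioi (0:ℝ), Real.cosh t ^ 1 * Real.exp (-x * Real.cosh t) := by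
  unfold besselK
  congr 1; funext t; rw [one_mul, pow_one, mul_comm]

lemma keyIdentity {x : ℝ} (hx : 0 < x) :
    (∫ t in Set.Ioi (0:ℝ), Real.cosh t ^ 1 * Real.exp (-x * Real.cosh t))
      - x * ∫ t in Set.Ioi (0:ℝ), Real.cosh t ^ 2 * Real.exp (-x * Real.cosh t)
      = -(x * besselK 0 x) := by
  have h0 := intK hx 0
  have h1 := intK hx 1
  have h2 := intK hx 2
  have key := ftcId hx
  have hsplit : ∫ t in Set.Ioi (0:ℝ), (Real.cosh t - x * Real.sinh t ^ 2) * Real.exp (-x * Real.cosh t)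
      = (∫ t in Set.Ioi (0:ℝ), Real.cosh t ^ 1 * Real.exp (-x * Real.cosh t))
        - x * (∫ t in Set.Ioi (0:ℝ), Real.cosh t ^ 2 * Real.exp (-x * Real.cosh t))
        + x * (∫ t in Set.Ioi (0:ℝ), Real.cosh t ^ 0 * Real.exp (-x * Real.cosh t)) := by
    have hpt : (fun t => (Real.cosh t - x * Real.sinh t ^ 2) * Real.exp (-x * Real.cosh t))
        = fun t => (Real.cosh t ^ 1 * Real.exp (-x * Real.cosh t)
            - x * (Real.cosh t ^ 2 * Real.exp (-x * Real.cosh t)))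
          + x * (Real.cosh t ^ 0 * Real.exp (-x * Real.cosh t)) := by
      funext t
      have hs : Real.sinh t ^ 2 = Real.cosh t ^ 2 - 1 := by
        have := Real.cosh_sq_sub_sinh_sq t; linarith
      rw [hs]; ring
    have hsub : IntegrableOn (fun t => Real.cosh t ^ 1 * Real.exp (-x * Real.cosh t)
        - x * (Real.cosh t ^ 2 * Real.exp (-x * Real.cosh t))) (Set.Ioi 0) :=
      h1.sub (h2.const_mul x)
    rw [hpt, integral_add hsub (h0.const_mul x),
      integral_sub h1 (h2.const_mul x), integral_const_mul, integral_const_mul]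
  rw [hsplit] at key
  rw [besselK_zero_eq]
  have : (∫ t in Set.Ioi (0:ℝ), Real.cosh t ^ 0 * Real.exp (-x * Real.cosh t))
      = ∫ t in Set.Ioi (0:ℝ), Real.exp (-x * Real.cosh t) := by
    congr 1; funext t; rw [pow_zero, one_mul]
  rw [this] at key
  linarith

lemma hasDerivF {x : ℝ} (hx : 0 < x) :
    HasDerivAt (fun x => x * besselK 1 x) (-(x * besselK 0 x)) x := by
  have h := (hasDerivAt_id x).mul (hasDerivK zero_le_one le_rfl hx)
  have heq : id x * (∫ t in Set.Ioi (0:ℝ),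
        -(Real.cosh t * (Real.exp (-x * Real.cosh t) * Real.cosh (1 * t))))
      + besselK 1 x * 1 = -(x * besselK 0 x) := by
    have hneg : (∫ t in Set.Ioi (0:ℝ),
        -(Real.cosh t * (Real.exp (-x * Real.cosh t) * Real.cosh (1 * t))))
        = -∫ t in Set.Ioi (0:ℝ), Real.cosh t ^ 2 * Real.exp (-x * Real.cosh t) := by
      rw [integral_neg]
      congr 1
      refine setIntegral_congr_fun measurableSet_Ioi fun t _ => ?_
      rw [one_mul]; ring
    rw [hneg, besselK_one_eq]
    have := keyIdentity hx
    simp only [id]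
    linarith
  have h2 : (1:ℝ) * besselK 1 x + (id x * ∫ t in Set.Ioi (0:ℝ),
      -(Real.cosh t * (Real.exp (-x * Real.cosh t) * Real.cosh (1 * t)))) = -(x * besselK 0 x) := by
    rw [← heq]; ring
  rw [h2] at h
  exact h

lemma intK0 {x : ℝ} (hx : 0 < x) :
    IntegrableOn (fun t => Real.exp (-x * Real.cosh t)) (Set.Ioi 0) := by
  simpa using intK hx 0

lemma K0_upper {x : ℝ} (hx : 0 < x) (hx1 : x ≤ 1) : besselK 0 x ≤ -Real.log x + 2 := by
  set T := Real.log (2 / x) with hT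
  have h2x : (1:ℝ) ≤ 2 / x := by rw [le_div_iff₀ hx]; linarith
  have hT0 : 0 ≤ T := Real.log_nonneg h2x
  have heT : Real.exp T = 2 / x := Real.exp_log (by positivity)
  have hint := intK0 hx
  have int1 : IntegrableOn (fun t => Real.exp (-x * Real.cosh t)) (Set.Ioc 0 T) :=
    hint.mono_set Set.Ioc_subset_Ioi_self
  have int2 : IntegrableOn (fun t => Real.exp (-x * Real.cosh t)) (Set.Ioi T) :=
    hint.mono_set (Set.Ioi_subset_Ioi hT0)
  have hsplit : besselK 0 x
      = (∫ t in Set.Ioc 0 T, Real.exp (-x * Real.cosh t))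
        + ∫ t in Set.Ioi T, Real.exp (-x * Real.cosh t) := by
    rw [besselK_zero_eq, ← Set.Ioc_union_Ioi_eq_Ioi hT0]
    exact setIntegral_union (Set.Ioc_disjoint_Ioi le_rfl) measurableSet_Ioi int1 int2
  have hb1 : (∫ t in Set.Ioc 0 T, Real.exp (-x * Real.cosh t)) ≤ T := by
    calc (∫ t in Set.Ioc 0 T, Real.exp (-x * Real.cosh t))
        ≤ ∫ _t in Set.Ioc 0 T, (1:ℝ) := by
          apply setIntegral_mono_on int1 (integrableOn_const (by simp))
            measurableSet_Ioc
          intro t _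
          rw [Real.exp_le_one_iff]
          have := Real.cosh_pos t
          nlinarith
      _ = T := by simp [Real.volume_Ioc]; try exact hT0
  have hb2 : (∫ t in Set.Ioi T, Real.exp (-x * Real.cosh t)) ≤ Real.exp (-1) := by
    have hrhs : IntegrableOn (fun t => Real.exp (T - 1) * Real.exp (-t)) (Set.Ioi T) := by
      have := (exp_neg_integrableOn_Ioi T (one_pos)).const_mul (Real.exp (T - 1))
      simp at this; exact this
    calc (∫ t in Set.Ioi T, Real.exp (-x * Real.cosh t))
        ≤ ∫ t in Set.Ioi T, Real.exp (T - 1) * Real.exp (-t) := by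
          apply setIntegral_mono_on int2 hrhs measurableSet_Ioi
          intro t ht
          rw [Set.mem_Ioi] at ht
          have ht0 : 0 < t := lt_of_le_of_lt hT0 ht
          rw [← Real.exp_add]
          apply Real.exp_le_exp.2
          have h1 : Real.exp t / 2 ≤ Real.cosh t := halfExpLeCosh t
          have h2 : Real.exp t = Real.exp T * Real.exp (t - T) := by
            rw [← Real.exp_add]; ring_nf
          have h3 : (t - T) + 1 ≤ Real.exp (t - T) := Real.add_one_le_exp _
          have h4 : x * Real.exp T = 2 := by rw [heT]; field_simp
          nlinarith [Real.exp_pos (t - T), Real.exp_pos t]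
      _ = Real.exp (T - 1) * Real.exp (-T) := by
          rw [integral_const_mul, integral_exp_neg_Ioi]
      _ = Real.exp (-1) := by rw [← Real.exp_add]; ring_nf
  have hlog2 : Real.log 2 ≤ 1 := by
    have := Real.log_le_sub_one_of_pos (x := 2) two_pos
    linarith
  have hexp1 : Real.exp (-1) ≤ 1 := by
    rw [Real.exp_le_one_iff]; norm_num
  have hTval : T = Real.log 2 - Real.log x := by
    rw [hT, Real.log_div two_ne_zero hx.ne']
  rw [hsplit]
  linarith

lemma K0_lower {x : ℝ} (hx : 0 < x) (hx1 : x ≤ Real.exp (-1)) :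
    -Real.log x - 2 ≤ besselK 0 x := by
  set T := -Real.log x with hT
  have hT1 : 1 ≤ T := by
    have : Real.log x ≤ -1 := by
      calc Real.log x ≤ Real.log (Real.exp (-1)) := Real.log_le_log hx hx1
        _ = -1 := Real.log_exp _
    simp [hT]; linarith
  have hT0 : 0 ≤ T := by linarith
  have heT : Real.exp T = 1 / x := by
    rw [hT, Real.exp_neg, Real.exp_log hx, one_div]
  have hint := intK0 hx
  have int1 : IntegrableOn (fun t => Real.exp (-x * Real.cosh t)) (Set.Ioc 0 T) :=
    hint.mono_set Set.Ioc_subset_Ioi_self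
  have step1 : (∫ t in Set.Ioc 0 T, Real.exp (-x * Real.cosh t)) ≤ besselK 0 x := by
    rw [besselK_zero_eq]
    apply setIntegral_mono_set hint
    · exact ae_of_all _ fun t => (Real.exp_pos _).le
    · exact HasSubset.Subset.eventuallyLE Set.Ioc_subset_Ioi_self
  have step2 : (∫ t in Set.Ioc 0 T, (1 - x * Real.exp t))
      ≤ ∫ t in Set.Ioc 0 T, Real.exp (-x * Real.cosh t) := by
    apply setIntegral_mono_on _ int1 measurableSet_Ioc
    · intro t ht
      rw [Set.mem_Ioc] at ht
      have h1 : (-x * Real.cosh t) + 1 ≤ Real.exp (-x * Real.cosh t) := Real.add_one_le_exp _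
      have h2 : Real.cosh t ≤ Real.exp t := coshLeExp ht.1.le
      nlinarith
    · apply Continuous.integrableOn_Ioc
      fun_prop
  have step3 : (∫ t in Set.Ioc 0 T, (1 - x * Real.exp t)) = T - x * (Real.exp T - 1) := by
    rw [← intervalIntegral.integral_of_le hT0]
    rw [intervalIntegral.integral_sub intervalIntegrable_const
      ((intervalIntegral.intervalIntegrable_exp (μ := volume)).const_mul x)]
    rw [intervalIntegral.integral_const_mul, integral_exp]
    simp
  have hval : T - x * (Real.exp T - 1) = T - 1 + x := by
    rw [heT]; field_simp; ring
  rw [hT] at step3 ⊢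
  nlinarith [step1, step2]

lemma sqLogTendsto : Tendsto (fun y : ℝ => y ^ 2 * Real.log y) (𝓝[>] (0:ℝ)) (𝓝 0) := by
  have h := tendsto_log_mul_rpow_nhdsGT_zero (r := 2) two_pos
  apply h.congr'
  filter_upwards [self_mem_nhdsWithin] with y hy
  rw [Set.mem_Ioi] at hy
  rw [show ((2:ℝ)) = ((2:ℕ):ℝ) by norm_num, Real.rpow_natCast]
  ring

lemma tendstoSinh : Tendsto Real.sinh atTop atTop := by
  apply tendsto_atTop_mono' _ _ (tendsto_atTop_add_const_right atTop (-1) tendstoCosh)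
  filter_upwards [eventually_ge_atTop (0:ℝ)] with t ht
  have h1 := Real.cosh_sub_sinh t
  have h2 : Real.exp (-t) ≤ 1 := by rw [Real.exp_le_one_iff]; linarith
  linarith
  
lemma oneEq {y : ℝ} (hy : 0 < y) :
    ∫ t in Set.Ioi (0:ℝ), y * Real.cosh t * Real.exp (-y * Real.sinh t) = 1 := by
  have hderiv : ∀ t ∈ Set.Ioi (0:ℝ),
      HasDerivAt (fun t => -Real.exp (-y * Real.sinh t))
        (y * Real.cosh t * Real.exp (-y * Real.sinh t)) t := by
    intro t _
    have h1 : HasDerivAt (fun t : ℝ => -y * Real.sinh t) (-y * Real.cosh t) t :=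
      (Real.hasDerivAt_sinh t).const_mul (-y)
    have := h1.exp.neg
    refine this.congr_deriv ?_
    ring
  have hint : IntegrableOn (fun t => y * Real.cosh t * Real.exp (-y * Real.sinh t)) (Set.Ioi 0) := by
    apply Integrable.mono ((intK hy 1).const_mul (y * Real.exp y))
      (Continuous.aestronglyMeasurable (by fun_prop))
    rw [ae_restrict_iff' measurableSet_Ioi]
    apply ae_of_all
    intro t ht
    rw [Set.mem_Ioi] at ht
    have hcs := Real.cosh_sub_sinh t
    have het : Real.exp (-t) ≤ 1 := by
      rw [Real.exp_le_one_iff]; linarith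
    have hc := Real.cosh_pos t
    have h1 : Real.exp (-y * Real.sinh t) ≤ Real.exp y * Real.exp (-y * Real.cosh t) := by
      rw [← Real.exp_add]
      apply Real.exp_le_exp.2
      nlinarith
    rw [Real.norm_eq_abs, Real.norm_eq_abs, abs_of_nonneg (by positivity),
      abs_of_nonneg (by positivity)]
    calc y * Real.cosh t * Real.exp (-y * Real.sinh t)
        ≤ y * Real.cosh t * (Real.exp y * Real.exp (-y * Real.cosh t)) := by
          apply mul_le_mul_of_nonneg_left h1 (by positivity)
      _ = y * Real.exp y * (Real.cosh t ^ 1 * Real.exp (-y * Real.cosh t)) := by ring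
  have htend : Tendsto (fun t => -Real.exp (-y * Real.sinh t)) atTop (𝓝 0) := by
    rw [show (0:ℝ) = -0 by norm_num]
    apply Tendsto.neg
    apply Real.tendsto_exp_atBot.comp
    exact (tendstoSinh.const_mul_atTop_of_neg (by linarith)).congr (fun t => rfl)
  have := integral_Ioi_of_hasDerivAt_of_tendsto (a := 0)
    (Continuous.continuousWithinAt (by fun_prop)) hderiv hint htend
  rw [this]
  simp
  
lemma Fgap {y : ℝ} (hy : 0 < y) (hy1 : y ≤ 1) :
    0 ≤ 1 - y * besselK 1 y ∧
      1 - y * besselK 1 y ≤ Real.exp 1 * y ^ 2 * besselK 0 y := by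
  have hF : y * besselK 1 y
      = ∫ t in Set.Ioi (0:ℝ), y * (Real.cosh t ^ 1 * Real.exp (-y * Real.cosh t)) := by
    rw [besselK_one_eq, integral_const_mul]
  have int1 : IntegrableOn (fun t => y * Real.cosh t * Real.exp (-y * Real.sinh t)) (Set.Ioi 0) := by
    apply Integrable.mono ((intK hy 1).const_mul (y * Real.exp y))
      (Continuous.aestronglyMeasurable (by fun_prop))
    rw [ae_restrict_iff' measurableSet_Ioi]
    apply ae_of_all
    intro t ht
    rw [Set.mem_Ioi] at ht
    have hcs := Real.cosh_sub_sinh t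
    have het : Real.exp (-t) ≤ 1 := by rw [Real.exp_le_one_iff]; linarith
    have hc := Real.cosh_pos t
    have h1 : Real.exp (-y * Real.sinh t) ≤ Real.exp y * Real.exp (-y * Real.cosh t) := by
      rw [← Real.exp_add]; apply Real.exp_le_exp.2; nlinarith
    rw [Real.norm_eq_abs, Real.norm_eq_abs, abs_of_nonneg (by positivity),
      abs_of_nonneg (by positivity)]
    calc y * Real.cosh t * Real.exp (-y * Real.sinh t)
        ≤ y * Real.cosh t * (Real.exp y * Real.exp (-y * Real.cosh t)) := by
          apply mul_le_mul_of_nonneg_left h1 (by positivity)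
      _ = y * Real.exp y * (Real.cosh t ^ 1 * Real.exp (-y * Real.cosh t)) := by ring
  have int2 : IntegrableOn (fun t => y * (Real.cosh t ^ 1 * Real.exp (-y * Real.cosh t))) (Set.Ioi 0) :=
    (intK hy 1).const_mul y
  have hgap : 1 - y * besselK 1 y
      = ∫ t in Set.Ioi (0:ℝ),
          (y * Real.cosh t * Real.exp (-y * Real.sinh t)
            - y * (Real.cosh t ^ 1 * Real.exp (-y * Real.cosh t))) := by
    rw [integral_sub int1 int2, oneEq hy, hF]
  constructor
  · rw [hgap]
    apply setIntegral_nonneg measurableSet_Ioi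
    intro t ht
    rw [Set.mem_Ioi] at ht
    have hsc : Real.sinh t ≤ Real.cosh t := (Real.sinh_lt_cosh t).le
    have : Real.exp (-y * Real.cosh t) ≤ Real.exp (-y * Real.sinh t) := by
      apply Real.exp_le_exp.2; nlinarith
    have hc := Real.cosh_pos t
    simp only [pow_one]
    nlinarith [mul_le_mul_of_nonneg_left this (show (0:ℝ) ≤ y * Real.cosh t by positivity)]
  · rw [hgap]
    have intR : IntegrableOn (fun t => Real.exp 1 * y ^ 2 * Real.exp (-y * Real.cosh t)) (Set.Ioi 0) :=
      (intK0 hy).const_mul _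
    calc (∫ t in Set.Ioi (0:ℝ),
          (y * Real.cosh t * Real.exp (-y * Real.sinh t)
            - y * (Real.cosh t ^ 1 * Real.exp (-y * Real.cosh t))))
        ≤ ∫ t in Set.Ioi (0:ℝ), Real.exp 1 * y ^ 2 * Real.exp (-y * Real.cosh t) := by
          apply setIntegral_mono_on (int1.sub int2) intR measurableSet_Ioi
          intro t ht
          rw [Set.mem_Ioi] at ht
          have hcs := Real.cosh_sub_sinh t
          have hc := Real.cosh_pos t
          have hA : Real.exp (-y * Real.sinh t)
              = Real.exp (-y * Real.cosh t) * Real.exp (y * Real.exp (-t)) := by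
            rw [← Real.exp_add]; congr 1; nlinarith
          set A := y * Real.exp (-t) with hAdef
          have hApos : 0 < A := by positivity
          have het1 : Real.exp (-t) ≤ 1 := by rw [Real.exp_le_one_iff]; linarith
          have hA1 : A ≤ 1 := by
            calc A ≤ y * 1 := by apply mul_le_mul_of_nonneg_left het1 hy.le
              _ ≤ 1 := by linarith
          have heA : Real.exp A ≤ Real.exp 1 := Real.exp_le_exp.2 hA1
          have hkey : Real.exp A - 1 ≤ A * Real.exp A := by
            have h := Real.add_one_le_exp (-A)
            have hinv : Real.exp (-A) * Real.exp A = 1 := by rw [← Real.exp_add]; simp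
            have h2 : (-A + 1) * Real.exp A ≤ Real.exp (-A) * Real.exp A :=
              mul_le_mul_of_nonneg_right h (Real.exp_pos A).le
            rw [hinv] at h2
            nlinarith
          have hce : Real.cosh t * Real.exp (-t) ≤ 1 := by
            have h2 := coshLeExp ht.le
            have h3 : Real.exp (-t) * Real.exp t = 1 := by
              rw [← Real.exp_add]; simp
            nlinarith [Real.exp_pos (-t)]
          have hE := Real.exp_pos (-y * Real.cosh t)
          calc y * Real.cosh t * Real.exp (-y * Real.sinh t)
                - y * (Real.cosh t ^ 1 * Real.exp (-y * Real.cosh t))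
              = y * Real.cosh t * Real.exp (-y * Real.cosh t) * (Real.exp A - 1) := by
                rw [hA]; ring
            _ ≤ y * Real.cosh t * Real.exp (-y * Real.cosh t) * (A * Real.exp A) := by
                apply mul_le_mul_of_nonneg_left hkey (by positivity)
            _ = y ^ 2 * (Real.cosh t * Real.exp (-t)) * Real.exp A
                  * Real.exp (-y * Real.cosh t) := by rw [hAdef]; ring
            _ ≤ Real.exp 1 * y ^ 2 * Real.exp (-y * Real.cosh t) := by
                have h5 : y ^ 2 * (Real.cosh t * Real.exp (-t)) * Real.exp A
                    ≤ y ^ 2 * 1 * Real.exp 1 := by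
                  apply mul_le_mul _ heA (Real.exp_pos A).le (by positivity)
                  apply mul_le_mul_of_nonneg_left hce (by positivity)
                nlinarith
      _ = Real.exp 1 * y ^ 2 * besselK 0 y := by
          rw [integral_const_mul, besselK_zero_eq]

lemma limF : Tendsto (fun y => y * besselK 1 y) (𝓝[>] (0:ℝ)) (𝓝 1) := by
  have hlow : Tendsto (fun y : ℝ => 1 - Real.exp 1 * (y ^ 2 * (-Real.log y + 2)))
      (𝓝[>] (0:ℝ)) (𝓝 1) := by
    have h1 : Tendsto (fun y : ℝ => y ^ 2 * (-Real.log y + 2)) (𝓝[>] (0:ℝ)) (𝓝 0) := by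
      have h2 : Tendsto (fun y : ℝ => -(y ^ 2 * Real.log y) + 2 * y ^ 2) (𝓝[>] (0:ℝ)) (𝓝 0) := by
        have h3 : Tendsto (fun y : ℝ => 2 * y ^ 2) (𝓝[>] (0:ℝ)) (𝓝 0) := by
          have : Tendsto (fun y : ℝ => 2 * y ^ 2) (𝓝 (0:ℝ)) (𝓝 (2 * 0 ^ 2)) :=
            ((continuous_const.mul (continuous_pow 2)).tendsto 0)
          simpa using this.mono_left nhdsWithin_le_nhds
        simpa using sqLogTendsto.neg.add h3
      apply h2.congr
      intro y; ring
    have := (h1.const_mul (Real.exp 1)).neg.add_const 1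
    simpa [sub_eq_neg_add] using this.congr (fun y => by ring)
  have hup : Tendsto (fun _y : ℝ => (1:ℝ)) (𝓝[>] (0:ℝ)) (𝓝 1) := tendsto_const_nhds
  apply tendsto_of_tendsto_of_tendsto_of_le_of_le' hlow hup
  · filter_upwards [Ioo_mem_nhdsGT_of_mem (Set.left_mem_Ico.2 one_pos)] with y hy
    obtain ⟨hy0, hy1⟩ := hy
    have h := (Fgap hy0 hy1.le).2
    have hK := K0_upper hy0 hy1.le
    have h2 : Real.exp 1 * y ^ 2 * besselK 0 y ≤ Real.exp 1 * (y ^ 2 * (-Real.log y + 2)) := by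
      have hlog : 0 ≤ -Real.log y + 2 := by
        have : Real.log y < 0 := Real.log_neg hy0 hy1
        linarith
      have hbK : besselK 0 y ≤ -Real.log y + 2 := hK
      nlinarith [mul_le_mul_of_nonneg_left hbK (show (0:ℝ) ≤ Real.exp 1 * y ^ 2 by positivity)]
    linarith
  · filter_upwards [Ioo_mem_nhdsGT_of_mem (Set.left_mem_Ico.2 one_pos)] with y hy
    have h := (Fgap hy.1 hy.2.le).1
    linarith

lemma contUK0 {u : ℝ} (hu : 0 < u) : ContinuousAt (fun u => u * besselK 0 u) u :=
  continuousAt_id.mul (hasDerivK le_rfl zero_le_one hu).continuousAt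

lemma gBounds {x : ℝ} (hx : 0 < x) (hx1 : x ≤ Real.exp (-1)) :
    x ^ 2 / 4 - x ^ 2 - x ^ 2 / 2 * Real.log x ≤ 1 - x * besselK 1 x ∧
      1 - x * besselK 1 x ≤ x ^ 2 / 4 + x ^ 2 - x ^ 2 / 2 * Real.log x := by
  set φp : ℝ → ℝ := fun u => u ^ 2 / 4 + u ^ 2 - u ^ 2 / 2 * Real.log u with hφp
  set φm : ℝ → ℝ := fun u => u ^ 2 / 4 - u ^ 2 - u ^ 2 / 2 * Real.log u with hφm
  have hxe1 : x ≤ 1 := hx1.trans (by rw [Real.exp_le_one_iff]; norm_num)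
  -- derivative facts
  have hdφ : ∀ u : ℝ, 0 < u →
      HasDerivAt φp (2 * u - u * Real.log u) u ∧ HasDerivAt φm (-2 * u - u * Real.log u) u := by
    intro u hu
    have h1 : HasDerivAt (fun u : ℝ => u ^ 2 / 2 * Real.log u)
        (u * Real.log u + u / 2) u := by
      have := ((hasDerivAt_pow 2 u).div_const 2).mul (Real.hasDerivAt_log hu.ne')
      refine this.congr_deriv ?_
      field_simp
      ring
    have h2 : HasDerivAt (fun u : ℝ => u ^ 2 / 4) (u / 2) u := by
      have := (hasDerivAt_pow 2 u).div_const 4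
      refine this.congr_deriv ?_
      push_cast; ring
    have h3 : HasDerivAt (fun u : ℝ => u ^ 2) (2 * u) u := by
      have := hasDerivAt_pow 2 u
      refine this.congr_deriv ?_
      push_cast; ring
    constructor
    · have := (h2.add h3).sub h1
      refine this.congr_deriv ?_
      ring
    · have := (h2.sub h3).sub h1
      refine this.congr_deriv ?_
      ring
  -- interval identity for 0 < y < x
  have hFTC : ∀ y : ℝ, 0 < y → y < x →
      (y * besselK 1 y - x * besselK 1 x = ∫ u in y..x, u * besselK 0 u) ∧
      (∫ u in y..x, u * besselK 0 u) ≤ φp x - φp y ∧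
      φm x - φm y ≤ (∫ u in y..x, u * besselK 0 u) := by
    intro y hy hyx
    have hsub : Set.uIcc y x ⊆ Set.Ioi (0:ℝ) := by
      rw [Set.uIcc_of_le hyx.le]
      intro u hu
      exact lt_of_lt_of_le hy hu.1
    have hcont : ContinuousOn (fun u => u * besselK 0 u) (Set.uIcc y x) :=
      fun u hu => ((contUK0 (hsub hu)).continuousWithinAt)
    have hFint : IntervalIntegrable (fun u => u * besselK 0 u) volume y x :=
      hcont.intervalIntegrable
    have hint' : IntervalIntegrable (fun u => -(u * besselK 0 u)) volume y x := by
      have := hFint.neg; exact this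
    have hident : x * besselK 1 x - y * besselK 1 y = ∫ u in y..x, -(u * besselK 0 u) :=
      Eq.symm <| intervalIntegral.integral_eq_sub_of_hasDerivAt
        (f := fun u => u * besselK 1 u) (f' := fun u => -(u * besselK 0 u))
        (fun u hu => hasDerivF (hsub hu)) hint'
    have h1 : y * besselK 1 y - x * besselK 1 x = ∫ u in y..x, u * besselK 0 u := by
      rw [intervalIntegral.integral_neg] at hident
      linarith
    refine ⟨h1, ?_, ?_⟩
    · have hψ : (∫ u in y..x, (2 * u - u * Real.log u)) = φp x - φp y := by
        apply intervalIntegral.integral_eq_sub_of_hasDerivAt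
        · intro u hu; exact (hdφ u (hsub hu)).1
        · apply ContinuousOn.intervalIntegrable
          intro u hu
          have hu0 : 0 < u := hsub hu
          exact (by fun_prop (disch := intro _; exact hu0.ne') :
            ContinuousAt (fun u : ℝ => 2 * u - u * Real.log u) u).continuousWithinAt
      rw [← hψ]
      have hψint : IntervalIntegrable (fun u : ℝ => 2 * u - u * Real.log u) volume y x := by
        apply ContinuousOn.intervalIntegrable
        intro u hu
        have hu0 : 0 < u := hsub hu
        exact (by fun_prop (disch := intro _; exact hu0.ne') :
          ContinuousAt (fun u : ℝ => 2 * u - u * Real.log u) u).continuousWithinAt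
      apply intervalIntegral.integral_mono_on hyx.le hFint hψint
      · intro u hu
        have hu0 : 0 < u := lt_of_lt_of_le hy hu.1
        have hue : u ≤ Real.exp (-1) := le_trans hu.2 hx1
        have := K0_upper hu0 (hue.trans (by rw [Real.exp_le_one_iff]; norm_num))
        nlinarith
    · have hψ : (∫ u in y..x, (-2 * u - u * Real.log u)) = φm x - φm y := by
        apply intervalIntegral.integral_eq_sub_of_hasDerivAt
        · intro u hu; exact (hdφ u (hsub hu)).2
        · apply ContinuousOn.intervalIntegrable
          intro u hu
          have hu0 : 0 < u := hsub hu
          exact (by fun_prop (disch := intro _; exact hu0.ne') :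
            ContinuousAt (fun u : ℝ => -2 * u - u * Real.log u) u).continuousWithinAt
      rw [← hψ]
      have hψint : IntervalIntegrable (fun u : ℝ => -2 * u - u * Real.log u) volume y x := by
        apply ContinuousOn.intervalIntegrable
        intro u hu
        have hu0 : 0 < u := hsub hu
        exact (by fun_prop (disch := intro _; exact hu0.ne') :
          ContinuousAt (fun u : ℝ => -2 * u - u * Real.log u) u).continuousWithinAt
      apply intervalIntegral.integral_mono_on hyx.le hψint hFint
      · intro u hu
        have hu0 : 0 < u := lt_of_lt_of_le hy hu.1
        have hue : u ≤ Real.exp (-1) := le_trans hu.2 hx1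
        have := K0_lower hu0 hue
        nlinarith
  -- limits as y → 0+
  have hφtend : ∀ c : ℝ, Tendsto (fun y : ℝ => y ^ 2 / 4 + c * y ^ 2 - y ^ 2 / 2 * Real.log y)
      (𝓝[>] (0:ℝ)) (𝓝 0) := by
    intro c
    have h1 : Tendsto (fun y : ℝ => y ^ 2 / 4 + c * y ^ 2) (𝓝[>] (0:ℝ)) (𝓝 0) := by
      have : Tendsto (fun y : ℝ => y ^ 2 / 4 + c * y ^ 2) (𝓝 (0:ℝ))
          (𝓝 (0 ^ 2 / 4 + c * 0 ^ 2)) :=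
        (((continuous_pow 2).div_const 4).add (continuous_const.mul (continuous_pow 2))).tendsto 0
      simpa using this.mono_left nhdsWithin_le_nhds
    have := h1.sub (sqLogTendsto.div_const 2)
    simpa using this.congr (fun y => by ring)
  have hmemIoo : Set.Ioo (0:ℝ) x ∈ 𝓝[>] (0:ℝ) := Ioo_mem_nhdsGT_of_mem (Set.left_mem_Ico.2 hx)
  have htendF : Tendsto (fun y : ℝ => y * besselK 1 y - x * besselK 1 x) (𝓝[>] (0:ℝ))
      (𝓝 (1 - x * besselK 1 x)) := limF.sub_const _
  constructor
  · -- lower bound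
    have htendφ : Tendsto (fun y : ℝ => φm x - φm y) (𝓝[>] (0:ℝ)) (𝓝 (φm x)) := by
      have := (hφtend (-1)).const_sub (φm x)
      simp only [hφm] at this ⊢
      simpa using this.congr (fun y => by ring)
    have hle : ∀ᶠ y in 𝓝[>] (0:ℝ),
        φm x - φm y ≤ y * besselK 1 y - x * besselK 1 x := by
      filter_upwards [hmemIoo] with y hy
      obtain ⟨h1, _, h3⟩ := hFTC y hy.1 hy.2
      linarith
    have := le_of_tendsto_of_tendsto htendφ htendF hle
    simpa [hφm] using this
  · have htendφ : Tendsto (fun y : ℝ => φp x - φp y) (𝓝[>] (0:ℝ)) (𝓝 (φp x)) := by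
      have := (hφtend 1).const_sub (φp x)
      simp only [hφp] at this ⊢
      simpa using this.congr (fun y => by ring)
    have hle : ∀ᶠ y in 𝓝[>] (0:ℝ),
        y * besselK 1 y - x * besselK 1 x ≤ φp x - φp y := by
      filter_upwards [hmemIoo] with y hy
      obtain ⟨h1, h2, _⟩ := hFTC y hy.1 hy.2
      linarith
    have := le_of_tendsto_of_tendsto htendF htendφ hle
    simpa [hφp] using this

lemma invNegLog : Tendsto (fun ξ : ℝ => (-Real.log ξ)⁻¹) (𝓝[>] (0:ℝ)) (𝓝 0) := by
  have h1 : Tendsto (fun ξ : ℝ => -Real.log ξ) (𝓝[>] (0:ℝ)) atTop :=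
    tendsto_neg_atBot_atTop.comp Real.tendsto_log_nhdsGT_zero
  exact h1.inv_tendsto_atTop

lemma ratioTendsto :
    Tendsto (fun ξ : ℝ =>
      (1 - 2 * Real.sqrt ξ * besselK 1 (2 * Real.sqrt ξ)) / (ξ * (-Real.log ξ)))
      (𝓝[>] (0:ℝ)) (𝓝 1) := by
  set δ : ℝ := min (Real.exp (-2) / 4) (1/2) with hδ
  have hδpos : 0 < δ := by
    apply lt_min _ (by norm_num)
    positivity
  have hmem : Set.Ioo (0:ℝ) δ ∈ 𝓝[>] (0:ℝ) := Ioo_mem_nhdsGT_of_mem (Set.left_mem_Ico.2 hδpos)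
  have hbound : ∀ ξ ∈ Set.Ioo (0:ℝ) δ,
      1 + (-3 - 2 * Real.log 2) * (-Real.log ξ)⁻¹
        ≤ (1 - 2 * Real.sqrt ξ * besselK 1 (2 * Real.sqrt ξ)) / (ξ * (-Real.log ξ)) ∧
      (1 - 2 * Real.sqrt ξ * besselK 1 (2 * Real.sqrt ξ)) / (ξ * (-Real.log ξ))
        ≤ 1 + (5 - 2 * Real.log 2) * (-Real.log ξ)⁻¹ := by
    intro ξ hξ
    obtain ⟨hξ0, hξδ⟩ := hξ
    set x : ℝ := 2 * Real.sqrt ξ with hxdef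
    have hsq : Real.sqrt ξ ^ 2 = ξ := Real.sq_sqrt hξ0.le
    have hsqpos : 0 < Real.sqrt ξ := Real.sqrt_pos.2 hξ0
    have hx0 : 0 < x := by positivity
    have hxe : x ≤ Real.exp (-1) := by
      have h1 : ξ ≤ Real.exp (-2) / 4 := le_trans hξδ.le (min_le_left _ _)
      have h2 : Real.sqrt ξ ≤ Real.sqrt (Real.exp (-2) / 4) := Real.sqrt_le_sqrt h1
      have h3 : Real.sqrt (Real.exp (-2) / 4) = Real.exp (-1) / 2 := by
        rw [show Real.exp (-2) / 4 = (Real.exp (-1) / 2) ^ 2 by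
          rw [div_pow, sq, ← Real.exp_add]; norm_num]
        exact Real.sqrt_sq (by positivity)
      rw [hxdef]
      rw [h3] at h2
      linarith
    have hξ1 : ξ < 1 := by
      have := min_le_right (Real.exp (-2) / 4) (1/2)
      rw [← hδ] at this
      linarith
    have hlogneg : Real.log ξ < 0 := Real.log_neg hξ0 hξ1
    have hD : 0 < ξ * (-Real.log ξ) := mul_pos hξ0 (by linarith)
    obtain ⟨hgl, hgu⟩ := gBounds hx0 hxe
    have hx2 : x ^ 2 = 4 * ξ := by
      rw [hxdef, mul_pow, hsq]; norm_num
    have hlogx : Real.log x = Real.log 2 + Real.log ξ / 2 := by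
      rw [hxdef, Real.log_mul two_ne_zero hsqpos.ne', Real.log_sqrt hξ0.le]
    rw [hx2, hlogx] at hgl hgu
    -- hgl : 4ξ/4 - 4ξ - (4ξ/2)(log 2 + log ξ/2) ≤ g
    -- i.e.  -3ξ - 2ξ log 2 - ξ log ξ ≤ g
    constructor
    · rw [le_div_iff₀ hD]
      have heq : (1 + (-3 - 2 * Real.log 2) * (-Real.log ξ)⁻¹) * (ξ * (-Real.log ξ))
          = ξ * (-Real.log ξ) + (-3 - 2 * Real.log 2) * ξ := by
        have hinv : (-Real.log ξ)⁻¹ * (-Real.log ξ) = 1 :=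
          inv_mul_cancel₀ (by simpa using hlogneg.ne)
        linear_combination ((-3 - 2 * Real.log 2) * ξ) * hinv
      rw [heq]
      nlinarith
    · rw [div_le_iff₀ hD]
      have heq : (1 + (5 - 2 * Real.log 2) * (-Real.log ξ)⁻¹) * (ξ * (-Real.log ξ))
          = ξ * (-Real.log ξ) + (5 - 2 * Real.log 2) * ξ := by
        have hinv : (-Real.log ξ)⁻¹ * (-Real.log ξ) = 1 :=
          inv_mul_cancel₀ (by simpa using hlogneg.ne)
        linear_combination ((5 - 2 * Real.log 2) * ξ) * hinv
      rw [heq]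
      nlinarith
  have hlo : Tendsto (fun ξ : ℝ => 1 + (-3 - 2 * Real.log 2) * (-Real.log ξ)⁻¹)
      (𝓝[>] (0:ℝ)) (𝓝 1) := by
    have := (invNegLog.const_mul (-3 - 2 * Real.log 2)).const_add 1
    simpa using this
  have hhi : Tendsto (fun ξ : ℝ => 1 + (5 - 2 * Real.log 2) * (-Real.log ξ)⁻¹)
      (𝓝[>] (0:ℝ)) (𝓝 1) := by
    have := (invNegLog.const_mul (5 - 2 * Real.log 2)).const_add 1
    simpa using this
  apply tendsto_of_tendsto_of_tendsto_of_le_of_le' hlo hhi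
  · filter_upwards [hmem] with ξ hξ
    exact (hbound ξ hξ).1
  · filter_upwards [hmem] with ξ hξ
    exact (hbound ξ hξ).2

theorem stmt_7 (N : ℕ) (hN : 1 ≤ N) :
    Tendsto
      (fun ξ : ℝ =>
        (1 - 2 * Real.sqrt ξ * besselK 1 (2 * Real.sqrt ξ)) ^ N /
          (ξ ^ N * (-Real.log ξ) ^ N))
      (nhdsWithin 0 (Set.Ioi 0)) (nhds 1) := by
  have h := ratioTendsto.pow N
  rw [one_pow] at h
  apply h.congr
  intro ξ
  rw [div_pow, mul_pow]
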